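/- For 0 < H < 1, define ν(h) = ⌊−log₂ h⌋ and ω_H(h) = h·2^{(ν(h)−1)(1−H)}/(2^{1−H}−1) + 2^{(1−ν(h))H}/(3(1−2^{−H})). Then for all h ∈ [0,1) and t ∈ [0,1−h], the Takagi–Landsberg function satisfies |x^H(t+h) − x^H(t)| ≤ ω_H(h). -/

import Mathlib

open Filter Finset Set MeasureTheory ProbabilityTheory

noncomputable def e00 (t : ℝ) : ℝ := max (min t (1 - t)) 0

noncomputable def fs (m : ℕ) (k : ℤ) (t : ℝ) : ℝ :=
  (2 : ℝ) ^ (-(m : ℝ) / 2) * e00 ((2 : ℝ) ^ m * t - (k : ℝ))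

def IsSign (θ : ℕ → ℕ → ℝ) : Prop := ∀ m k, θ m k = 1 ∨ θ m k = -1

noncomputable def tlTerm (H : ℝ) (θ : ℕ → ℕ → ℝ) (m : ℕ) (t : ℝ) : ℝ :=
  (2 : ℝ) ^ ((m : ℝ) * (1 / 2 - H)) *
    ∑ k ∈ Finset.range (2 ^ m), θ m k * fs m (k : ℤ) t

noncomputable def sPartial (H : ℝ) (θ : ℕ → ℕ → ℝ) (n : ℕ) (t : ℝ) : ℝ :=
  ∑ m ∈ Finset.range n, tlTerm H θ m t

def MemX (H : ℝ) (x : ℝ → ℝ) : Prop :=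
  ∃ θ : ℕ → ℕ → ℝ, IsSign θ ∧ ∀ t : ℝ, x t = ∑' m : ℕ, tlTerm H θ m t

noncomputable def xTL (H : ℝ) (t : ℝ) : ℝ := ∑' m : ℕ, tlTerm H (fun _ _ => 1) m t

noncomputable def dyadicSum (p : ℝ) (x : ℝ → ℝ) (n : ℕ) (t : ℝ) : ℝ :=
  ∑ k ∈ Finset.range (2 ^ n),
    if (k : ℝ) / 2 ^ n ≤ t then |x (((k : ℝ) + 1) / 2 ^ n) - x ((k : ℝ) / 2 ^ n)| ^ p else 0

noncomputable def nuFloor (h : ℝ) : ℤ := ⌊-(Real.logb 2 h)⌋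

noncomputable def omegaH (H h : ℝ) : ℝ :=
  h * (2 : ℝ) ^ (((nuFloor h : ℝ) - 1) * (1 - H)) / ((2 : ℝ) ^ (1 - H) - 1) +
    (2 : ℝ) ^ ((1 - (nuFloor h : ℝ)) * H) / (3 * (1 - (2 : ℝ) ^ (-H)))

noncomputable def dd (s : ℝ) : ℝ := min (Int.fract s) (1 - Int.fract s)

lemma dd_nonneg (s : ℝ) : 0 ≤ dd s := by
  have h1 := Int.fract_nonneg s
  have h2 := Int.fract_lt_one s
  exact le_min h1 (by linarith)

lemma dd_le_half (s : ℝ) : dd s ≤ 1 / 2 := by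
  rcases le_total (Int.fract s) (1/2) with h | h
  · exact le_trans (min_le_left _ _) h
  · exact le_trans (min_le_right _ _) (by linarith)

lemma dd_le_abs (s : ℝ) (n : ℤ) : dd s ≤ |s - (n : ℝ)| := by
  have hfl := Int.floor_le s
  have hfl' := Int.lt_floor_add_one s
  rcases le_or_gt (n : ℝ) (Int.floor s : ℝ) with h | h
  · have : dd s ≤ Int.fract s := min_le_left _ _
    rw [Int.fract] at this
    have : dd s ≤ s - (n:ℝ) := by linarith
    exact this.trans (le_abs_self _)
  · have hn : ((Int.floor s : ℝ) + 1) ≤ (n : ℝ) := by exact_mod_cast Int.add_one_le_iff.mpr (by exact_mod_cast h)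
    have h2 : dd s ≤ 1 - Int.fract s := min_le_right _ _
    rw [Int.fract] at h2
    have : dd s ≤ (n:ℝ) - s := by linarith
    exact this.trans (by rw [abs_sub_comm]; exact le_abs_self _)

lemma dd_exists (s : ℝ) : ∃ n : ℤ, dd s = |s - (n : ℝ)| := by
  rcases le_total (Int.fract s) (1 - Int.fract s) with h | h
  · refine ⟨Int.floor s, ?_⟩
    rw [dd, min_eq_left h, Int.fract, abs_of_nonneg (by linarith [Int.floor_le s])]
  · refine ⟨Int.floor s + 1, ?_⟩
    rw [dd, min_eq_right h, Int.fract]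
    rw [abs_of_nonpos (by push_cast; linarith [Int.lt_floor_add_one s])]
    push_cast; ring

lemma dd_lip (a b : ℝ) : |dd a - dd b| ≤ |a - b| := by
  have key : ∀ x y : ℝ, dd x - dd y ≤ |x - y| := by
    intro x y
    obtain ⟨n, hn⟩ := dd_exists y
    have h1 := dd_le_abs x n
    have h2 : |x - (n:ℝ)| ≤ |x - y| + |y - (n:ℝ)| := abs_sub_le _ _ _
    rw [hn]; linarith
  rw [abs_sub_le_iff]
  constructor
  · exact key a b
  · rw [abs_sub_comm]; exact key b a


lemma fract_two_mul (s : ℝ) : Int.fract (2 * s) = Int.fract (2 * Int.fract s) := by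
  conv_lhs => rw [show (2:ℝ) * s = 2 * Int.fract s + 2 * (Int.floor s : ℝ) by rw [Int.fract]; ring]
  rw [show (2:ℝ) * (Int.floor s : ℝ) = ((2 * Int.floor s : ℤ) : ℝ) by push_cast; ring,
    Int.fract_add_intCast]

lemma dd_double {s : ℝ} (h : 1/3 ≤ dd s) : dd (2 * s) = 1 - 2 * dd s := by
  have hf0 := Int.fract_nonneg s
  have hf1 := Int.fract_lt_one s
  have h1 : 1/3 ≤ Int.fract s := le_trans h (min_le_left _ _)
  have h2 : Int.fract s ≤ 2/3 := by have := le_trans h (min_le_right _ _); linarith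
  set f := Int.fract s with hf
  rw [dd, fract_two_mul s, dd, ← hf]
  rcases lt_trichotomy (2 * f) 1 with hc | hc | hc
  · rw [Int.fract_eq_self.mpr ⟨by linarith, hc⟩, min_eq_right (by linarith),
      min_eq_left (by linarith)]
  · have hz : Int.fract (2 * f) = 0 := by
      rw [show (2:ℝ) * f = ((1:ℤ):ℝ) by norm_num; linarith, Int.fract_intCast]
    rw [hz, min_eq_left (by norm_num), min_eq_left (by linarith)]
    linarith
  · have hz : Int.fract (2 * f) = 2 * f - 1 := by
      rw [show (2:ℝ) * f = (2 * f - 1) + ((1:ℤ):ℝ) by rw [Int.cast_one]; ring, Int.fract_add_intCast,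
        Int.fract_eq_self.mpr ⟨by linarith, by linarith⟩]
      push_cast
      ring
    rw [hz, min_eq_left (by linarith), min_eq_right (by linarith)]
    ring

lemma e00_of_nonpos {s : ℝ} (h : s ≤ 0) : e00 s = 0 := by
  rw [e00, max_eq_right]
  exact le_trans (min_le_left _ _) h

lemma e00_of_one_le {s : ℝ} (h : 1 ≤ s) : e00 s = 0 := by
  rw [e00, max_eq_right]
  exact le_trans (min_le_right _ _) (by linarith)

lemma sum_e00 (n : ℕ) {s : ℝ} (h0 : 0 ≤ s) (h1 : s ≤ n) :
    ∑ k ∈ Finset.range n, e00 (s - (k : ℝ)) = dd s := by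
  rcases eq_or_lt_of_le h1 with he | hlt
  · have hd : dd s = 0 := by
      rw [he, show ((n:ℝ)) = ((n:ℤ):ℝ) by push_cast; ring, dd, Int.fract_intCast,
        min_eq_left (by norm_num)]
    rw [hd]
    apply Finset.sum_eq_zero
    intro k hk
    have hk' : (k:ℝ) ≤ (n:ℝ) - 1 := by
      have := Finset.mem_range.mp hk
      have : (k:ℝ) + 1 ≤ n := by exact_mod_cast this
      linarith
    exact e00_of_one_le (by rw [he]; linarith)
  · have hj0 : 0 ≤ ⌊s⌋ := Int.floor_nonneg.mpr h0
    set j : ℕ := ⌊s⌋.toNat with hj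
    have hjs : (j : ℝ) = (⌊s⌋ : ℝ) := by rw [hj]; exact_mod_cast congrArg Int.cast (Int.toNat_of_nonneg hj0)
    have hjlt : j < n := by
      have : (⌊s⌋ : ℝ) ≤ s := Int.floor_le s
      have : (j : ℝ) < n := by rw [hjs]; linarith
      exact_mod_cast this
    have hfl := Int.floor_le s
    have hfl' := Int.lt_floor_add_one s
    rw [Finset.sum_eq_single_of_mem j (Finset.mem_range.mpr hjlt)]
    · have hfr : s - (j:ℝ) = Int.fract s := by rw [hjs, Int.fract]
      have hA := Int.fract_nonneg s
      have hB := Int.fract_lt_one s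
      rw [hfr, e00, dd, max_eq_left]
      exact le_min hA (by linarith)
    · intro k hk hne
      rcases lt_or_gt_of_ne hne with hlt' | hgt
      · -- k < j : s - k ≥ 1
        have : (k:ℝ) + 1 ≤ j := by exact_mod_cast hlt'
        apply e00_of_one_le
        rw [hjs] at this
        linarith
      · -- k > j : s - k ≤ 0
        have : (j:ℝ) + 1 ≤ k := by exact_mod_cast hgt
        apply e00_of_nonpos
        rw [hjs] at this
        linarith

lemma summable_dd {c : ℝ} (hc0 : 0 ≤ c) (hc1 : c < 1) (s : ℝ) :
    Summable (fun m : ℕ => c ^ m * dd ((2:ℝ) ^ m * s)) := by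
  apply Summable.of_nonneg_of_le (fun m => mul_nonneg (pow_nonneg hc0 m) (dd_nonneg _))
    (fun m => ?_) (summable_geometric_of_lt_one hc0 hc1)
  calc c ^ m * dd ((2:ℝ) ^ m * s) ≤ c ^ m * 1 := by
        apply mul_le_mul_of_nonneg_left _ (pow_nonneg hc0 m)
        exact le_trans (dd_le_half _) (by norm_num)
    _ = c ^ m := mul_one _

noncomputable def FF (c s : ℝ) : ℝ := ∑' m : ℕ, c ^ m * dd ((2:ℝ) ^ m * s)

lemma FF_nonneg {c : ℝ} (hc0 : 0 ≤ c) (s : ℝ) : 0 ≤ FF c s :=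
  tsum_nonneg (fun m => mul_nonneg (pow_nonneg hc0 m) (dd_nonneg _))

lemma FF_le {c : ℝ} (hc : 1/2 ≤ c) (hc1 : c < 1) (s : ℝ) : FF c s ≤ 1 / (3 * (1 - c)) := by
  have hc0 : (0:ℝ) ≤ c := by linarith
  set u : ℕ → ℝ := fun m => dd ((2:ℝ) ^ m * s) - 1/3 with hu
  have hgeo : Summable (fun m : ℕ => c ^ m) := summable_geometric_of_lt_one hc0 hc1
  have hsum : Summable (fun m : ℕ => c ^ m * u m) := by
    have : (fun m : ℕ => c ^ m * u m)
        = fun m : ℕ => c ^ m * dd ((2:ℝ) ^ m * s) - c ^ m * (1/3) := by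
      funext m; rw [hu]; ring
    rw [this]
    exact (summable_dd hc0 hc1 s).sub (hgeo.mul_right _)
  -- key recursion: if u N > 0 then u (N+1) = -2 * u N
  have hrec : ∀ N : ℕ, 0 < u N → u (N + 1) = -2 * u N := by
    intro N hN
    have h13 : 1/3 ≤ dd ((2:ℝ) ^ N * s) := by rw [hu] at hN; simp only at hN; linarith
    have hdb := dd_double h13
    have harg : (2:ℝ) ^ (N+1) * s = 2 * ((2:ℝ) ^ N * s) := by ring
    rw [hu]
    simp only
    rw [harg, hdb]
    rw [hu] at hN; simp only at hN
    linarith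
  -- induction: partial sums bounded
  have hQ : ∀ N : ℕ, ∑ m ∈ Finset.range (N + 1), c ^ m * u m ≤ c ^ N * max (u N) 0 := by
    intro N
    induction N with
    | zero => simp [le_max_left]
    | succ N ih =>
      rw [Finset.sum_range_succ]
      rcases le_or_gt (u N) 0 with h0 | h0
      · have : max (u N) 0 = 0 := max_eq_right h0
        rw [this, mul_zero] at ih
        calc ∑ m ∈ Finset.range (N+1), c ^ m * u m + c ^ (N+1) * u (N+1)
            ≤ 0 + c ^ (N+1) * u (N+1) := by linarith
          _ ≤ c ^ (N+1) * max (u (N+1)) 0 := by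
              rw [zero_add]
              exact mul_le_mul_of_nonneg_left (le_max_left _ _) (pow_nonneg hc0 _)
      · have hmax : max (u N) 0 = u N := max_eq_left h0.le
        rw [hmax] at ih
        have hu1 := hrec N h0
        have hle : ∑ m ∈ Finset.range (N+1), c ^ m * u m + c ^ (N+1) * u (N+1)
            ≤ c ^ N * u N + c ^ (N+1) * (-2 * u N) := by rw [hu1]; linarith
        have : c ^ N * u N + c ^ (N+1) * (-2 * u N) = c ^ N * u N * (1 - 2 * c) := by ring
        rw [this] at hle
        have hnonpos : c ^ N * u N * (1 - 2 * c) ≤ 0 := by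
          apply mul_nonpos_of_nonneg_of_nonpos
          · exact mul_nonneg (pow_nonneg hc0 _) h0.le
          · linarith
        calc _ ≤ (0:ℝ) := le_trans hle hnonpos
          _ ≤ c ^ (N+1) * max (u (N+1)) 0 :=
            mul_nonneg (pow_nonneg hc0 _) (le_max_right _ _)
  -- tsum of u-part ≤ 0
  have htsum_le : ∑' m : ℕ, c ^ m * u m ≤ 0 := by
    have htend : Filter.Tendsto (fun N : ℕ => ∑ m ∈ Finset.range (N + 1), c ^ m * u m)
        Filter.atTop (nhds (∑' m : ℕ, c ^ m * u m)) := by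
      exact (hsum.hasSum.tendsto_sum_nat).comp (Filter.tendsto_add_atTop_nat 1)
    have hbnd : ∀ N : ℕ, ∑ m ∈ Finset.range (N + 1), c ^ m * u m ≤ c ^ N * (1/6) := by
      intro N
      refine le_trans (hQ N) ?_
      apply mul_le_mul_of_nonneg_left _ (pow_nonneg hc0 N)
      have : u N ≤ 1/6 := by
        rw [hu]; simp only
        have := dd_le_half ((2:ℝ) ^ N * s)
        linarith
      exact max_le this (by norm_num)
    have hzero : Filter.Tendsto (fun N : ℕ => c ^ N * (1/6)) Filter.atTop (nhds 0) := by
      have := tendsto_pow_atTop_nhds_zero_of_lt_one hc0 hc1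
      simpa using this.mul_const (1/6 : ℝ)
    exact le_of_tendsto_of_tendsto' htend hzero hbnd
  -- combine
  have hsplit : FF c s = (∑' m : ℕ, c ^ m * u m) + (∑' m : ℕ, c ^ m * (1/3)) := by
    rw [← Summable.tsum_add hsum (hgeo.mul_right _)]
    apply tsum_congr
    intro m
    rw [hu]; ring
  rw [hsplit]
  have hg : (∑' m : ℕ, c ^ m * (1/3)) = (1 - c)⁻¹ * (1/3) := by
    rw [tsum_mul_right, tsum_geometric_of_lt_one hc0 hc1]
  rw [hg]
  have h1c : (1:ℝ) - c > 0 := by linarith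
  have hkey : (1 - c)⁻¹ * (1/3) = 1 / (3 * (1 - c)) := by
    field_simp
  linarith [htsum_le]

noncomputable def XX (c t : ℝ) : ℝ := ∑' m : ℕ, c ^ m * dd ((2:ℝ) ^ m * t)

lemma XX_split {c : ℝ} (hc0 : 0 ≤ c) (hc1 : c < 1) (M : ℕ) (t : ℝ) :
    XX c t = (∑ m ∈ Finset.range M, c ^ m * dd ((2:ℝ) ^ m * t)) + c ^ M * FF c ((2:ℝ) ^ M * t) := by
  have hs := summable_dd hc0 hc1 t
  have h1 := hs.sum_add_tsum_nat_add M
  rw [XX, ← h1]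
  congr 1
  have : ∀ i : ℕ, c ^ (i + M) * dd ((2:ℝ) ^ (i + M) * t)
      = c ^ M * (c ^ i * dd ((2:ℝ) ^ i * ((2:ℝ) ^ M * t))) := by
    intro i
    rw [pow_add, pow_add]
    ring_nf
  rw [FF, ← tsum_mul_left]
  exact tsum_congr this

lemma main_est {c : ℝ} (hc : 1/2 ≤ c) (hc1 : c < 1) (M : ℕ) (a b : ℝ) :
    |XX c b - XX c a| ≤ (∑ m ∈ Finset.range M, c ^ m * 2 ^ m) * |b - a|
      + c ^ M * (1 / (3 * (1 - c))) := by
  have hc0 : (0:ℝ) ≤ c := by linarith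
  rw [XX_split hc0 hc1 M b, XX_split hc0 hc1 M a]
  have hdiff : (∑ m ∈ Finset.range M, c ^ m * dd ((2:ℝ) ^ m * b)) + c ^ M * FF c ((2:ℝ) ^ M * b)
      - ((∑ m ∈ Finset.range M, c ^ m * dd ((2:ℝ) ^ m * a)) + c ^ M * FF c ((2:ℝ) ^ M * a))
      = (∑ m ∈ Finset.range M, (c ^ m * dd ((2:ℝ) ^ m * b) - c ^ m * dd ((2:ℝ) ^ m * a)))
        + c ^ M * (FF c ((2:ℝ) ^ M * b) - FF c ((2:ℝ) ^ M * a)) := by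
    rw [Finset.sum_sub_distrib]; ring
  rw [hdiff]
  refine le_trans (abs_add_le _ _) (add_le_add ?_ ?_)
  · refine le_trans (Finset.abs_sum_le_sum_abs _ _) ?_
    rw [Finset.sum_mul]
    apply Finset.sum_le_sum
    intro m _
    rw [← mul_sub, abs_mul, abs_pow, abs_of_nonneg hc0]
    rw [mul_assoc]
    apply mul_le_mul_of_nonneg_left _ (pow_nonneg hc0 m)
    refine le_trans (dd_lip _ _) ?_
    rw [← mul_sub, abs_mul, abs_of_nonneg (by positivity : (0:ℝ) ≤ (2:ℝ)^m)]
  · rw [abs_mul, abs_pow, abs_of_nonneg hc0]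
    apply mul_le_mul_of_nonneg_left _ (pow_nonneg hc0 M)
    rw [abs_le]
    constructor
    · have := FF_le hc hc1 ((2:ℝ) ^ M * a)
      have := FF_nonneg hc0 ((2:ℝ) ^ M * b)
      linarith
    · have := FF_le hc hc1 ((2:ℝ) ^ M * b)
      have := FF_nonneg hc0 ((2:ℝ) ^ M * a)
      linarith





lemma tlTerm_eq (H : ℝ) (m : ℕ) {t : ℝ} (h0 : 0 ≤ t) (h1 : t ≤ 1) :
    tlTerm H (fun _ _ => 1) m t = ((2:ℝ) ^ (-H)) ^ m * dd ((2:ℝ) ^ m * t) := by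
  have hsum : ∑ k ∈ Finset.range (2 ^ m), (fun (_ _ : ℕ) => (1:ℝ)) m k * fs m (k : ℤ) t
      = (2:ℝ) ^ (-(m:ℝ)/2) * dd ((2:ℝ) ^ m * t) := by
    have : ∀ k ∈ Finset.range (2 ^ m), (fun (_ _ : ℕ) => (1:ℝ)) m k * fs m (k : ℤ) t
        = (2:ℝ) ^ (-(m:ℝ)/2) * e00 ((2:ℝ) ^ m * t - (k : ℝ)) := by
      intro k _
      simp [fs]
    rw [Finset.sum_congr rfl this, ← Finset.mul_sum]
    congr 1
    have hcast : ((2 ^ m : ℕ) : ℝ) = (2:ℝ) ^ m := by push_cast; ring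
    apply sum_e00 (2 ^ m)
    · positivity
    · rw [hcast]
      nlinarith [pow_pos (by norm_num : (0:ℝ) < 2) m]
  rw [tlTerm, hsum, ← mul_assoc]
  congr 1
  rw [← Real.rpow_natCast ((2:ℝ) ^ (-H)) m, ← Real.rpow_mul (by norm_num : (0:ℝ) ≤ 2),
    ← Real.rpow_add (by norm_num : (0:ℝ) < 2)]
  congr 1
  ring

lemma xTL_eq (H : ℝ) {t : ℝ} (h0 : 0 ≤ t) (h1 : t ≤ 1) :
    xTL H t = XX ((2:ℝ) ^ (-H)) t :=
  tsum_congr fun m => tlTerm_eq H m h0 h1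



theorem stmt7 (H : ℝ) (hH : H ∈ Set.Ioo (0:ℝ) 1) (h : ℝ) (hh : h ∈ Set.Ico (0:ℝ) 1)
    (t : ℝ) (ht : t ∈ Set.Icc 0 (1 - h)) :
    |xTL H (t + h) - xTL H t| ≤ omegaH H h := by
  obtain ⟨hH0, hH1⟩ := hH
  obtain ⟨hh0, hh1⟩ := hh
  obtain ⟨ht0, ht1⟩ := ht
  set c : ℝ := (2:ℝ) ^ (-H) with hcdef
  have hc0 : (0:ℝ) < c := Real.rpow_pos_of_pos (by norm_num) _
  have hchalf : 1/2 ≤ c := by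
    have h1 : (2:ℝ) ^ (-1:ℝ) ≤ (2:ℝ) ^ (-H) :=
      Real.rpow_le_rpow_of_exponent_le one_le_two (by linarith)
    have h2 : (2:ℝ) ^ (-1:ℝ) = 1/2 := by
      rw [Real.rpow_neg (by norm_num), Real.rpow_one]; norm_num
    rw [← h2]; exact h1
  have hc1 : c < 1 := Real.rpow_lt_one_of_one_lt_of_neg one_lt_two (by linarith)
  set ν : ℤ := nuFloor h with hν
  set M : ℕ := (ν - 1).toNat with hM
  have hMcast : ((ν:ℝ) - 1) ≤ (M:ℝ) := by
    have := Int.self_le_toNat (ν - 1)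
    have : ((ν - 1 : ℤ) : ℝ) ≤ ((ν - 1).toNat : ℝ) := by exact_mod_cast this
    push_cast at this
    rw [hM]; push_cast; linarith
  -- rpow facts
  set r : ℝ := (2:ℝ) ^ (1 - H) with hrdef
  have hr1 : 1 < r := by
    rw [hrdef]
    apply Real.one_lt_rpow_iff_of_pos (by norm_num) |>.mpr
    exact Or.inl ⟨one_lt_two, by linarith⟩
  have h2c : 2 * c = r := by
    rw [hcdef, hrdef, show (1:ℝ) - H = 1 + (-H) by ring,
      Real.rpow_add (by norm_num : (0:ℝ) < 2), Real.rpow_one]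
  -- rewrite xTL via XX
  have hx1 : xTL H (t + h) = XX c (t + h) := xTL_eq H (by linarith) (by linarith)
  have hx2 : xTL H t = XX c t := xTL_eq H (by linarith) (by linarith)
  rw [hx1, hx2]
  have hmain := main_est hchalf hc1 M t (t + h)
  have habs : |t + h - t| = h := by rw [show t + h - t = h by ring, abs_of_nonneg hh0]
  rw [habs] at hmain
  refine le_trans hmain (add_le_add ?_ ?_)
  · -- head bound
    have hgeom : (∑ m ∈ Finset.range M, c ^ m * 2 ^ m) = (r ^ M - 1)/(r - 1) := by
      have : ∀ m : ℕ, c ^ m * 2 ^ m = r ^ m := by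
        intro m; rw [← mul_pow, mul_comm, h2c]
      rw [Finset.sum_congr rfl (fun m _ => this m), geom_sum_eq (ne_of_gt hr1)]
    rw [hgeom]
    have hrν : (2:ℝ) ^ (((ν:ℝ) - 1) * (1 - H)) = r ^ ((ν:ℝ) - 1) := by
      rw [hrdef, ← Real.rpow_mul (by norm_num : (0:ℝ) ≤ 2), mul_comm]
    have hkey : r ^ M - 1 ≤ r ^ ((ν:ℝ) - 1) := by
      rcases le_or_gt ν 0 with hν0 | hν0
      · have : M = 0 := by rw [hM]; omega
        rw [this]
        simp only [pow_zero]
        have : (0:ℝ) < r ^ ((ν:ℝ) - 1) := Real.rpow_pos_of_pos (by linarith) _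
        linarith
      · have hMν : (M:ℝ) = (ν:ℝ) - 1 := by
          have h' : (M : ℤ) = ν - 1 := by rw [hM]; omega
          have h'' := congrArg (fun z : ℤ => (z:ℝ)) h'
          push_cast at h''
          exact h''
        rw [← hMν, ← Real.rpow_natCast r M]
        have : (0:ℝ) < r ^ (M:ℝ) := Real.rpow_pos_of_pos (by linarith) _
        linarith
    rw [hrν, ← hrdef]
    have hr0 : (0:ℝ) < r - 1 := by linarith
    calc (r ^ M - 1)/(r - 1) * h = h * (r ^ M - 1) / (r - 1) := by ring
      _ ≤ h * r ^ ((ν:ℝ) - 1) / (r - 1) :=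
          (div_le_div_iff_of_pos_right hr0).mpr (mul_le_mul_of_nonneg_left hkey hh0)
  · -- tail bound
    have hcM : c ^ M ≤ (2:ℝ) ^ ((1 - (ν:ℝ)) * H) := by
      rw [hcdef, ← Real.rpow_natCast ((2:ℝ)^(-H)) M, ← Real.rpow_mul (by norm_num)]
      apply Real.rpow_le_rpow_of_exponent_le one_le_two
      have : 0 < H := hH0
      nlinarith [hMcast]
    have hpos : 0 < 3 * (1 - c) := by linarith
    calc c ^ M * (1 / (3 * (1 - c))) ≤ (2:ℝ) ^ ((1 - (ν:ℝ)) * H) * (1 / (3 * (1 - c))) := by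
          apply mul_le_mul_of_nonneg_right hcM
          positivity
      _ = (2:ℝ) ^ ((1 - (ν:ℝ)) * H) / (3 * (1 - (2:ℝ) ^ (-H))) := by
          rw [hcdef]; ring
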